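/- Let L > 0 and let f : E → ℝ be convex with nonempty minimizer set X* and minimum value f*, and suppose f is L-QG+. Consider sequences (x_k)_{k≥0}, (g_k)_{k≥0}, (v_k)_{k≥0} in E and reals (α_k)_{k≥1} such that: v_0 = 0; for every k ≥ 0, g_k ∈ ∂f(x_k) and ⟨g_k, v_k⟩ = 0 and v_{k+1} = v_k + g_k; and for every k ≥ 1, x_k = y_k + α_k·v_k where y_k = (k/(k+1))·x_{k−1} + (1/(k+1))·x_0, with the exact line-search property f(x_k) ≤ f(y_k + α·v_k) for all α ∈ ℝ. Then for every n ∈ ℕ, f(x_n) − f* ≤ (L/(2(n+1)))·d(x_0, X*)². (This is the guarantee for the heavy-ball method with exact line search, which does not use knowledge of L.) -/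

import Mathlib

open scoped RealInnerProductSpace

private lemma heavy_ball_auxA {E : Type*} [NormedAddCommGroup E] [InnerProductSpace ℝ E]
    (L : ℝ) (hL : 0 < L) (f : E → ℝ) (Xstar : Set E) (fstar : ℝ)
    (hQG : ∀ z, f z - fstar ≤ L / 2 * Metric.infDist z Xstar ^ 2)
    (z : E) (hz : z ∈ Xstar)
    (xk gk p : E) (hsubk : ∀ y, f y ≥ f xk + ⟪gk, y - xk⟫)
    (hp : ⟪gk, xk - p⟫ = 0) :
    2 * L * (f xk - fstar) ≤ 2 * L * ⟪gk, p - z⟫ - ‖gk‖ ^ 2 := by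
  set w := z + L⁻¹ • gk with hw
  have h1 := hsubk w
  have h2 := hQG w
  have h3 : Metric.infDist w Xstar ≤ L⁻¹ * ‖gk‖ := by
    calc Metric.infDist w Xstar ≤ dist w z := Metric.infDist_le_dist_of_mem hz
      _ = ‖L⁻¹ • gk‖ := by rw [hw, dist_eq_norm, add_sub_cancel_left]
      _ = L⁻¹ * ‖gk‖ := by
          rw [norm_smul, Real.norm_eq_abs, abs_of_pos (inv_pos.mpr hL)]
  have h4 : Metric.infDist w Xstar ^ 2 ≤ (L⁻¹ * ‖gk‖) ^ 2 :=
    pow_le_pow_left₀ Metric.infDist_nonneg h3 2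
  have h2' : f w - fstar ≤ L / 2 * ((L⁻¹ * ‖gk‖) ^ 2) := by
    calc f w - fstar ≤ L / 2 * Metric.infDist w Xstar ^ 2 := h2
      _ ≤ L / 2 * ((L⁻¹ * ‖gk‖) ^ 2) := by
          apply mul_le_mul_of_nonneg_left h4 (by positivity)
  have h5 : ⟪gk, w - xk⟫ = ⟪gk, z - p⟫ + L⁻¹ * ‖gk‖ ^ 2 - ⟪gk, xk - p⟫ := by
    have hwe : w - xk = (z - p) + L⁻¹ • gk - (xk - p) := by rw [hw]; abel
    rw [hwe, inner_sub_right, inner_add_right, real_inner_smul_right,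
      real_inner_self_eq_norm_sq]
  rw [hp, sub_zero] at h5
  have h6 : ⟪gk, p - z⟫ = -⟪gk, z - p⟫ := by
    rw [← inner_neg_right]; congr 1; abel
  have hmain : f xk - fstar ≤ L / 2 * ((L⁻¹ * ‖gk‖) ^ 2) - ⟪gk, z - p⟫ - L⁻¹ * ‖gk‖ ^ 2 := by
    rw [h5] at h1; linarith
  have hcalc : 2 * L * (L / 2 * ((L⁻¹ * ‖gk‖) ^ 2)) = ‖gk‖ ^ 2 := by
    field_simp
  have hcalc2 : 2 * L * (L⁻¹ * ‖gk‖ ^ 2) = 2 * ‖gk‖ ^ 2 := by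
    field_simp
  have hmul := mul_le_mul_of_nonneg_left hmain (by positivity : (0:ℝ) ≤ 2 * L)
  rw [h6]
  nlinarith [hmul, hcalc, hcalc2]

theorem heavy_ball_line_search_guarantee
    {E : Type*} [NormedAddCommGroup E] [InnerProductSpace ℝ E] [FiniteDimensional ℝ E]
    (L : ℝ) (hL : 0 < L) (f : E → ℝ) (hconv : ConvexOn ℝ Set.univ f)
    (Xstar : Set E) (hXstar : Xstar = {z | ∀ y, f z ≤ f y}) (hne : Xstar.Nonempty)
    (fstar : ℝ) (hfstar : ∀ z ∈ Xstar, f z = fstar)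
    (hQG : ∀ z, f z - fstar ≤ L / 2 * Metric.infDist z Xstar ^ 2)
    (x g v : ℕ → E) (α : ℕ → ℝ)
    (hv0 : v 0 = 0)
    (hsub : ∀ k, ∀ y, f y ≥ f (x k) + ⟪g k, y - x k⟫)
    (horth : ∀ k, ⟪g k, v k⟫ = 0)
    (hvrec : ∀ k, v (k + 1) = v k + g k)
    (hx : ∀ k, 1 ≤ k →
      x k = (((k : ℝ) / ((k : ℝ) + 1)) • x (k - 1) + ((1 : ℝ) / ((k : ℝ) + 1)) • x 0)
        + α k • v k)
    (hls : ∀ k, 1 ≤ k → ∀ a : ℝ,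
      f (x k) ≤ f ((((k : ℝ) / ((k : ℝ) + 1)) • x (k - 1) + ((1 : ℝ) / ((k : ℝ) + 1)) • x 0)
        + a • v k)) :
    ∀ n : ℕ, f (x n) - fstar ≤ L / (2 * ((n : ℝ) + 1)) * Metric.infDist (x 0) Xstar ^ 2 := by
  intro n
  obtain ⟨z0, hz0⟩ := hne
  have hminz : ∀ z ∈ Xstar, ∀ y, f z ≤ f y := by
    intro z hz y; rw [hXstar] at hz; exact hz y
  have h0 : 0 ≤ f (x n) - fstar := by
    have h1 := hminz z0 hz0 (x n)
    have h2 := hfstar z0 hz0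
    linarith
  have key : ∀ z ∈ Xstar, ((n:ℝ) + 1) * (f (x n) - fstar) ≤ L / 2 * ‖x 0 - z‖ ^ 2 := by
    intro z hz
    have pot : ∀ m : ℕ, 2 * L * (((m:ℝ) + 1) * (f (x m) - fstar)) + ‖v (m+1)‖ ^ 2
        ≤ 2 * L * ⟪v (m+1), x 0 - z⟫ := by
      intro m
      induction m with
      | zero =>
        have hA0 := heavy_ball_auxA L hL f Xstar fstar hQG z hz (x 0) (g 0) (x 0)
          (hsub 0) (by simp)
        have hv1 : v 1 = g 0 := by rw [hvrec 0, hv0, zero_add]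
        rw [hv1]
        push_cast
        linarith
      | succ m ih =>
        have hxe := hx (m+1) (Nat.le_add_left 1 m)
        simp only [Nat.add_sub_cancel] at hxe
        push_cast at hxe
        set K : ℝ := (m : ℝ) + 1 with hKdef
        set yk : E := (K / (K + 1)) • x m + (1 / (K + 1)) • x 0 with hykdef
        have hK1 : (0:ℝ) < K + 1 := by positivity
        have horthp : ⟪g (m+1), x (m+1) - yk⟫ = 0 := by
          have hd : x (m+1) - yk = α (m+1) • v (m+1) := by
            rw [hxe]; abel
          rw [hd, real_inner_smul_right, horth (m+1), mul_zero]
        have hyk : (K + 1) • yk = K • x m + x 0 := by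
          rw [hykdef, smul_add, smul_smul, smul_smul,
            mul_div_cancel₀ _ hK1.ne', mul_one_div, div_self hK1.ne', one_smul]
        have hid_vec : K • (yk - x m) + (yk - z) = x 0 - z := by
          have h1 : K • (yk - x m) + (yk - z) = (K + 1) • yk - K • x m - z := by
            module
          rw [h1, hyk]; abel
        have hid : K * ⟪g (m+1), yk - x m⟫ + ⟪g (m+1), yk - z⟫ = ⟪g (m+1), x 0 - z⟫ := by
          rw [← hid_vec, inner_add_right, real_inner_smul_right]
        have hA := heavy_ball_auxA L hL f Xstar fstar hQG z hz (x (m+1)) (g (m+1)) yk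
          (hsub (m+1)) horthp
        have hB : f (x (m+1)) - fstar ≤ (f (x m) - fstar) + ⟪g (m+1), yk - x m⟫ := by
          have h1 := hsub (m+1) (x m)
          have h2 : ⟪g (m+1), x m - x (m+1)⟫
              = ⟪g (m+1), x m - yk⟫ - ⟪g (m+1), x (m+1) - yk⟫ := by
            rw [← inner_sub_right]; congr 1; abel
          have h3 : ⟪g (m+1), x m - yk⟫ = -⟪g (m+1), yk - x m⟫ := by
            rw [← inner_neg_right]; congr 1; abel
          rw [h2, horthp, sub_zero, h3] at h1
          linarith
        have hBK := mul_le_mul_of_nonneg_left hB (by positivity : (0:ℝ) ≤ 2 * L * K)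
        have hnorm : ‖v (m+2)‖ ^ 2 = ‖v (m+1)‖ ^ 2 + ‖g (m+1)‖ ^ 2 := by
          rw [show m + 2 = (m+1) + 1 from rfl, hvrec (m+1), norm_add_sq_real,
            real_inner_comm, horth (m+1)]
          ring
        have hinner : ⟪v (m+2), x 0 - z⟫ = ⟪v (m+1), x 0 - z⟫ + ⟪g (m+1), x 0 - z⟫ := by
          rw [show m + 2 = (m+1) + 1 from rfl, hvrec (m+1), inner_add_left]
        have hid2 : 2 * L * (K * ⟪g (m+1), yk - x m⟫) + 2 * L * ⟪g (m+1), yk - z⟫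
            = 2 * L * ⟪g (m+1), x 0 - z⟫ := by
          rw [← hid]; ring
        push_cast
        rw [show ((m:ℝ) + 1 + 1) = K + 1 from rfl]
        rw [show m + 1 + 1 = m + 2 from rfl, hnorm, hinner]
        nlinarith [ih, hA, hBK, hid2]
    have hpn := pot n
    have hsq : (0:ℝ) ≤ ‖L • (x 0 - z) - v (n+1)‖ ^ 2 := by positivity
    have hexp : ‖L • (x 0 - z) - v (n+1)‖ ^ 2
        = L ^ 2 * ‖x 0 - z‖ ^ 2 - 2 * (L * ⟪x 0 - z, v (n+1)⟫) + ‖v (n+1)‖ ^ 2 := by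
      rw [norm_sub_sq_real, real_inner_smul_left, norm_smul, Real.norm_eq_abs,
        abs_of_pos hL, mul_pow]
    have hcomm : ⟪v (n+1), x 0 - z⟫ = ⟪x 0 - z, v (n+1)⟫ := real_inner_comm _ _
    rw [hexp] at hsq
    rw [hcomm] at hpn
    nlinarith [hpn, hsq, hL]
  -- pass to the infimum
  set C := f (x n) - fstar with hC
  set D := Metric.infDist (x 0) Xstar with hD
  have harg : 0 ≤ 2 * ((n:ℝ) + 1) * C / L := by
    apply div_nonneg _ hL.le
    have : (0:ℝ) ≤ 2 * ((n:ℝ) + 1) := by positivity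
    exact mul_nonneg this h0
  have hrD : Real.sqrt (2 * ((n:ℝ) + 1) * C / L) ≤ D := by
    by_contra hcon
    push_neg at hcon
    obtain ⟨y, hy, hdy⟩ := (Metric.infDist_lt_iff ⟨z0, hz0⟩).mp hcon
    have h1 : 2 * ((n:ℝ) + 1) * C / L ≤ ‖x 0 - y‖ ^ 2 := by
      rw [div_le_iff₀ hL]
      nlinarith [key y hy]
    have h2 : Real.sqrt (2 * ((n:ℝ) + 1) * C / L) ≤ ‖x 0 - y‖ := by
      rw [show ‖x 0 - y‖ = Real.sqrt (‖x 0 - y‖ ^ 2) from (Real.sqrt_sq (norm_nonneg _)).symm]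
      exact Real.sqrt_le_sqrt h1
    rw [← dist_eq_norm] at h2
    linarith
  have hD2 : 2 * ((n:ℝ) + 1) * C / L ≤ D ^ 2 := by
    calc 2 * ((n:ℝ) + 1) * C / L = Real.sqrt (2 * ((n:ℝ) + 1) * C / L) ^ 2 :=
          (Real.sq_sqrt harg).symm
      _ ≤ D ^ 2 := pow_le_pow_left₀ (Real.sqrt_nonneg _) hrD 2
  have hnp : (0:ℝ) < 2 * ((n:ℝ) + 1) := by positivity
  rw [div_mul_eq_mul_div, le_div_iff₀ hnp]
  rw [div_le_iff₀ hL] at hD2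
  nlinarith [hD2]
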